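/- Fix g₁, g₂ ∈ E₊(𝔣) generating a free rank-2 finite-index subgroup of E₊(𝔣), let i ∈ {1,2} and let l ≥ 1 be an integer. Suppose the real number Dᵢ′ := (2·g_i(2)^{−l} − g_i(1)^{−l} − g_i(3)^{−l})·log g₂(1) − (2·g_i(1)^{−l} − g_i(2)^{−l} − g_i(3)^{−l})·log g₂(2) is nonzero. Then the slope of the curve 𝒞_{i,l} at t = 1 satisfies lim_{t→1⁻} (y_{i,l}(t) − y_{i,l}(1))/(x_{i,l}(t) − x_{i,l}(1)) = −[(2·g_i(2)^{−l} − g_i(1)^{−l} − g_i(3)^{−l})·log g₁(1) − (2·g_i(1)^{−l} − g_i(2)^{−l} − g_i(3)^{−l})·log g₁(2)] / Dᵢ′. -/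

import Mathlib

noncomputable section

open Filter Set

/-- `ℝ³`, the target of the embedding of the totally real cubic field `F`
via its three real embeddings. -/
abbrev V3 := Fin 3 → ℝ

/-- All coordinates positive (totally positive). -/
def IsPos (x : V3) : Prop := ∀ i, 0 < x i

/-- Coordinatewise logarithm `Log`. -/
def Log3 (x : V3) : V3 := fun i => Real.log (x i)

/-- `l_i(M)`: the vector in the trace-zero hyperplane with entry `M` in place `i`
and `-M/2` in the other places. -/
def lvec (i : Fin 3) (M : ℝ) : V3 := fun j => if j = i then M else -M / 2

/-- `δ(x₁,x₂,x₃)`: sign of the determinant of the matrix with columns `x₁, x₂, x₃`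
(with `sign 0 = 0`). -/
def delta3 (x₁ x₂ x₃ : V3) : ℝ :=
  Real.sign (Matrix.det (Matrix.of fun i j : Fin 3 => ![x₁ i, x₂ i, x₃ i] j))

/-- `δ([x ∣ y]) = δ(1, x, x·y)`. -/
def deltaB (x y : V3) : ℝ := delta3 1 x (x * y)

/-- Projection `z ↦ z_ℋ = (z₁z₂z₃)^(-1/3)·z`. -/
def projH (x : V3) : V3 := fun i => (x 0 * x 1 * x 2) ^ (-(1 / 3) : ℝ) * x i

/-- Abstraction of `E₊(𝔣)`: a group of totally positive vectors of norm one whose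
`Log`-image is a full lattice in the trace-zero hyperplane `ℋ`. -/
def IsUnitLattice (E : Subgroup V3ˣ) : Prop :=
  (∀ u ∈ E, IsPos (u : V3)) ∧
  (∀ u ∈ E, Log3 (u : V3) 0 + Log3 (u : V3) 1 + Log3 (u : V3) 2 = 0) ∧
  ∃ u ∈ E, ∃ v ∈ E, LinearIndependent ℝ ![Log3 (u : V3), Log3 (v : V3)] ∧
    ∀ w ∈ E, ∃ m n : ℤ, Log3 (w : V3) = (m : ℝ) • Log3 (u : V3) + (n : ℝ) • Log3 (v : V3)

/-- `⟨g₁, g₂⟩` is a subgroup of `E`, free of rank `2` and of finite index in `E`. -/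
def FreeRank2FinIndex (E : Subgroup V3ˣ) (g₁ g₂ : V3ˣ) : Prop :=
  g₁ ∈ E ∧ g₂ ∈ E ∧
  (∀ m n : ℤ, g₁ ^ m * g₂ ^ n = 1 → m = 0 ∧ n = 0) ∧
  (Subgroup.closure {g₁, g₂}).relIndex E ≠ 0

/-- Open simplicial cone on one generator (a ray). -/
def cone1 (v : V3) : Set V3 := {x | ∃ c : ℝ, 0 < c ∧ x = c • v}

/-- Open simplicial cone on two generators. -/
def cone2 (v w : V3) : Set V3 := {x | ∃ c d : ℝ, 0 < c ∧ 0 < d ∧ x = c • v + d • w}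

/-- Open simplicial cone on three generators. -/
def cone3 (v w z : V3) : Set V3 :=
  {x | ∃ c d e : ℝ, 0 < c ∧ 0 < d ∧ 0 < e ∧ x = c • v + d • w + e • z}

/-- `C([x ∣ y]) = C(1, x, x·y)`. -/
def coneB (x y : V3) : Set V3 := cone3 1 x (x * y)

/-- The first standard basis vector of `ℝ³`. -/
def eOne : V3 := ![1, 0, 0]

/-- `C̄_{e₁}`-operation: the points of `ℝ³` brought into `S` by every sufficiently
small perturbation by `e₁`. -/
def closE1 (S : Set V3) : Set V3 :=
  {x | ∃ ε : ℝ, 0 < ε ∧ ∀ h : ℝ, 0 < h → h < ε → x + h • eOne ∈ S}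

/-- `C̄_{e₁}([x ∣ y])`. -/
def coneBbar (x y : V3) : Set V3 := closE1 (coneB x y)

/-- Multiplicative translate `v·S` of a subset of `ℝ³` (coordinatewise product). -/
def mulSet (v : V3) (S : Set V3) : Set V3 := (fun x => v * x) '' S

/-- The coordinates of `Log(α_ℋ)`. -/
def logHc (α : V3) (i : Fin 3) : ℝ :=
  Real.log (α i) - (Real.log (α 0) + Real.log (α 1) + Real.log (α 2)) / 3

/-- The projection `φ_{(g₁,g₂)} : ℝ₊³ → ℝ²`, given by the coordinates of `Log(α_ℋ)`
in the basis `(Log g₁, Log g₂)` of `ℋ` (the explicit formula of the paper). -/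
def phi (g₁ g₂ α : V3) : ℝ × ℝ :=
  ((logHc α 1 * Real.log (g₂ 0) - logHc α 0 * Real.log (g₂ 1)) /
      (Real.log (g₂ 0) * Real.log (g₁ 1) - Real.log (g₂ 1) * Real.log (g₁ 0)),
    (logHc α 1 * Real.log (g₁ 0) - logHc α 0 * Real.log (g₁ 1)) /
      (Real.log (g₁ 0) * Real.log (g₂ 1) - Real.log (g₁ 1) * Real.log (g₂ 0)))

/-- The straight segment `L(t)` from `(1,1,1)` to `v`. -/
def seg (v : V3) (t : ℝ) : V3 := fun j => 1 + t * (v j - 1)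

/-- `x_{i,l}(t)`: first coordinate of `𝒞_{i,l}(t) = φ_{(g₁,g₂)}(L_{i,l}(t))`,
where `g` is `g₁` or `g₂`. -/
def xC (g₁ g₂ g : V3) (l : ℕ) (t : ℝ) : ℝ := (phi g₁ g₂ (seg (g ^ l) t)).1

/-- `y_{i,l}(t)`: second coordinate of `𝒞_{i,l}(t)`. -/
def yC (g₁ g₂ g : V3) (l : ℕ) (t : ℝ) : ℝ := (phi g₁ g₂ (seg (g ^ l) t)).2

/-- The Colmez domain `ℬ = C̄_{e₁}([ε₁∣ε₂]) ∪ C̄_{e₁}([ε₂∣ε₁])`. -/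
def Bbar (ε₁ ε₂ : V3) : Set V3 := coneBbar ε₁ ε₂ ∪ coneBbar ε₂ ε₁

/-- The explicit cone decomposition of `ℬ` with chosen boundary cones. -/
def BsetC (ε₁ ε₂ : V3) : Set V3 :=
  cone1 1 ∪ cone2 1 ε₁ ∪ cone2 1 ε₂ ∪ cone2 1 (ε₁ * ε₂) ∪
    cone3 1 ε₁ (ε₁ * ε₂) ∪ cone3 1 ε₂ (ε₁ * ε₂)

/-- The explicit cone decomposition of `ℬ₁`. -/
def B1setC (ε₂ π : V3) : Set V3 :=
  cone1 π ∪ cone2 π (ε₂ * π) ∪ cone2 1 π ∪ cone2 1 (ε₂ * π) ∪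
    cone3 1 ε₂ (ε₂ * π) ∪ cone3 1 π (ε₂ * π)

/-- The explicit cone decomposition of `ℬ₂`. -/
def B2setC (ε₁ π : V3) : Set V3 :=
  cone1 π ∪ cone2 π (ε₁ * π) ∪ cone2 1 π ∪ cone2 1 (ε₁ * π) ∪
    cone3 1 ε₁ (ε₁ * π) ∪ cone3 1 π (ε₁ * π)


section Stmt4Aux

lemma comb_eq_zero {U V : V3} (s t : ℝ) (h0 : s * U 0 + t * V 0 = 0)
    (h1 : s * U 1 + t * V 1 = 0) (h2 : s * U 2 + t * V 2 = 0) :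
    s • U + t • V = 0 := by
  funext j
  fin_cases j <;>
    simp only [Pi.add_apply, Pi.smul_apply, smul_eq_mul, Pi.zero_apply]
  · exact h0
  · exact h1
  · exact h2
lemma det2_ne_zero_of_indep {U V : V3}
    (hUV : LinearIndependent ℝ ![U, V])
    (hU : U 0 + U 1 + U 2 = 0) (hV : V 0 + V 1 + V 2 = 0) :
    U 0 * V 1 - U 1 * V 0 ≠ 0 := by
  intro hdet
  rw [LinearIndependent.pair_iff] at hUV
  by_cases h1 : U 1 = 0
  · by_cases h0 : U 0 = 0
    · have h2 : U 2 = 0 := by linarith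
      have := (hUV 1 0 (comb_eq_zero 1 0 (by simp [h0]) (by simp [h1]) (by simp [h2]))).1
      norm_num at this
    · refine h0 ?_
      have := (hUV (V 0) (-(U 0)) (comb_eq_zero _ _ (by ring)
        (by linear_combination -hdet) (by linear_combination V 0 * hU - U 0 * hV + hdet))).2
      linarith [neg_eq_zero.mp this]
  · refine h1 ?_
    have := (hUV (V 1) (-(U 1)) (comb_eq_zero _ _ (by linear_combination hdet)
      (by ring) (by linear_combination V 1 * hU - U 1 * hV - hdet))).2
    linarith [neg_eq_zero.mp this]
lemma log_coord_zpow_mul (g₁ g₂ : V3ˣ) (p q : ℤ) (j : Fin 3) :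
    Real.log (((g₁ ^ p * g₂ ^ q : V3ˣ) : V3) j)
      = p * Real.log ((g₁ : V3) j) + q * Real.log ((g₂ : V3) j) := by
  let e : V3ˣ →* ℝˣ := Units.map (Pi.evalMonoidHom (fun _ : Fin 3 => ℝ) j)
  have hc : ∀ u : V3ˣ, ((e u : ℝˣ) : ℝ) = (u : V3) j := fun u => rfl
  have ha : ((g₁ : V3) j) ≠ 0 := by rw [← hc g₁]; exact (e g₁).ne_zero
  have hb : ((g₂ : V3) j) ≠ 0 := by rw [← hc g₂]; exact (e g₂).ne_zero
  have h1 : ((g₁ ^ p * g₂ ^ q : V3ˣ) : V3) j = ((g₁ : V3) j) ^ p * ((g₂ : V3) j) ^ q := by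
    have := hc (g₁ ^ p * g₂ ^ q)
    rw [map_mul, map_zpow, map_zpow] at this
    rw [← this, Units.val_mul, Units.val_zpow_eq_zpow_val, Units.val_zpow_eq_zpow_val, hc, hc]
  rw [h1, Real.log_mul (zpow_ne_zero p ha) (zpow_ne_zero q hb),
    Real.log_zpow, Real.log_zpow]
lemma unit_eq_one_of_log (w : V3ˣ) (hw : IsPos (w : V3))
    (h : ∀ j, Real.log ((w : V3) j) = 0) : w = 1 := by
  have : (w : V3) = 1 := by
    funext j
    have := Real.exp_log (hw j)
    rw [h j, Real.exp_zero] at this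
    simpa using this.symm
  exact Units.ext this

lemma keydet (E : Subgroup V3ˣ) (hE : IsUnitLattice E) (g₁ g₂ : V3ˣ)
    (hfree : FreeRank2FinIndex E g₁ g₂) :
    Real.log ((g₂ : V3) 0) * Real.log ((g₁ : V3) 1) -
      Real.log ((g₂ : V3) 1) * Real.log ((g₁ : V3) 0) ≠ 0 := by
  obtain ⟨hpos, htr, u, hu, v, hv, hUV, hlat⟩ := hE
  obtain ⟨h1E, h2E, hrel, -⟩ := hfree
  obtain ⟨m₁, n₁, hG1⟩ := hlat g₁ h1E
  obtain ⟨m₂, n₂, hG2⟩ := hlat g₂ h2E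
  have hUVdet := det2_ne_zero_of_indep hUV (htr u hu) (htr v hv)
  have hG1c : ∀ j, Log3 (g₁ : V3) j = m₁ * Log3 (u : V3) j + n₁ * Log3 (v : V3) j := by
    intro j
    have := congrFun hG1 j
    simpa [Pi.add_apply, Pi.smul_apply, smul_eq_mul] using this
  have hG2c : ∀ j, Log3 (g₂ : V3) j = m₂ * Log3 (u : V3) j + n₂ * Log3 (v : V3) j := by
    intro j
    have := congrFun hG2 j
    simpa [Pi.add_apply, Pi.smul_apply, smul_eq_mul] using this
  -- the integer determinant is nonzero
  have hone : ∀ P Q : ℤ, P * m₁ + Q * m₂ = 0 → P * n₁ + Q * n₂ = 0 → P = 0 ∧ Q = 0 := by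
    intro P Q hm hn
    have hw : g₁ ^ P * g₂ ^ Q = 1 := by
      apply unit_eq_one_of_log _ (hpos _ (mul_mem (zpow_mem h1E P) (zpow_mem h2E Q)))
      intro j
      rw [log_coord_zpow_mul]
      have e1 := hG1c j
      have e2 := hG2c j
      simp only [Log3] at e1 e2
      rw [e1, e2]
      have hm' : (P : ℝ) * m₁ + Q * m₂ = 0 := by exact_mod_cast congrArg (Int.cast : ℤ → ℝ) hm
      have hn' : (P : ℝ) * n₁ + Q * n₂ = 0 := by exact_mod_cast congrArg (Int.cast : ℤ → ℝ) hn
      linear_combination Real.log ((u : V3) j) * hm' + Real.log ((v : V3) j) * hn'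
    exact hrel P Q hw
  have hd : (m₁ * n₂ - n₁ * m₂ : ℤ) ≠ 0 := by
    intro hd0
    by_cases hm1 : m₁ = 0
    · by_cases hn1 : n₁ = 0
      · have := (hone 1 0 (by simp [hm1]) (by simp [hn1])).1
        norm_num at this
      · exact hn1 (neg_eq_zero.mp (hone n₂ (-n₁) (by linear_combination hd0) (by ring)).2)
    · exact hm1 (neg_eq_zero.mp (hone m₂ (-m₁) (by ring) (by linear_combination -hd0)).2)
  have hdR : ((m₁ : ℝ) * n₂ - n₁ * m₂) ≠ 0 := by
    exact_mod_cast fun h => hd (by exact_mod_cast h)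
  intro h
  apply hUVdet
  have expand : Real.log ((g₂ : V3) 0) * Real.log ((g₁ : V3) 1) -
      Real.log ((g₂ : V3) 1) * Real.log ((g₁ : V3) 0)
      = -(((m₁ : ℝ) * n₂ - n₁ * m₂) *
        (Log3 (u : V3) 0 * Log3 (v : V3) 1 - Log3 (u : V3) 1 * Log3 (v : V3) 0)) := by
    have e10 := hG1c 0; have e11 := hG1c 1
    have e20 := hG2c 0; have e21 := hG2c 1
    simp only [Log3] at e10 e11 e20 e21 ⊢
    rw [e10, e11, e20, e21]
    ring
  rw [expand] at h
  have := neg_eq_zero.mp h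
  rcases mul_eq_zero.mp this with h' | h'
  · exact absurd h' hdR
  · exact h'


end Stmt4Aux

/-- the slope of the curve `𝒞_{i,l}` at `t = 1`. -/

theorem stmt4 (E : Subgroup V3ˣ) (hE : IsUnitLattice E) (g₁ g₂ : V3ˣ)
    (hfree : FreeRank2FinIndex E g₁ g₂) (g : V3)
    (hg : g = (g₁ : V3) ∨ g = (g₂ : V3)) (l : ℕ) (hl : 1 ≤ l)
    (hD : (2 * (g 1 ^ l)⁻¹ - (g 0 ^ l)⁻¹ - (g 2 ^ l)⁻¹) * Real.log ((g₂ : V3) 0) -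
        (2 * (g 0 ^ l)⁻¹ - (g 1 ^ l)⁻¹ - (g 2 ^ l)⁻¹) * Real.log ((g₂ : V3) 1) ≠ 0) :
    Filter.Tendsto
      (fun t : ℝ =>
        (yC (g₁ : V3) (g₂ : V3) g l t - yC (g₁ : V3) (g₂ : V3) g l 1) /
          (xC (g₁ : V3) (g₂ : V3) g l t - xC (g₁ : V3) (g₂ : V3) g l 1))
      (nhdsWithin 1 (Set.Iio 1))
      (nhds (-(((2 * (g 1 ^ l)⁻¹ - (g 0 ^ l)⁻¹ - (g 2 ^ l)⁻¹) * Real.log ((g₁ : V3) 0) -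
          (2 * (g 0 ^ l)⁻¹ - (g 1 ^ l)⁻¹ - (g 2 ^ l)⁻¹) * Real.log ((g₁ : V3) 1)) /
        ((2 * (g 1 ^ l)⁻¹ - (g 0 ^ l)⁻¹ - (g 2 ^ l)⁻¹) * Real.log ((g₂ : V3) 0) -
          (2 * (g 0 ^ l)⁻¹ - (g 1 ^ l)⁻¹ - (g 2 ^ l)⁻¹) * Real.log ((g₂ : V3) 1))))) := by
  have hD₁ : Real.log ((g₂ : V3) 0) * Real.log ((g₁ : V3) 1) -
      Real.log ((g₂ : V3) 1) * Real.log ((g₁ : V3) 0) ≠ 0 := keydet E hE g₁ g₂ hfree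
  have hgpos : ∀ j, 0 < g j := by
    rcases hg with h | h
    · exact h ▸ fun j => hE.1 g₁ hfree.1 j
    · exact h ▸ fun j => hE.1 g₂ hfree.2.1 j
  have hgl : ∀ j : Fin 3, (0:ℝ) < g j ^ l := fun j => pow_pos (hgpos j) l
  have hgln : ∀ j : Fin 3, (g j ^ l : ℝ) ≠ 0 := fun j => (hgl j).ne'
  set p := Real.log ((g₁ : V3) 0) with hp
  set q := Real.log ((g₁ : V3) 1) with hq
  set r := Real.log ((g₂ : V3) 0) with hr
  set s := Real.log ((g₂ : V3) 1) with hs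
  set D₁ : ℝ := r * q - s * p with hD₁def
  set N : ℝ := (2 * (g 1 ^ l)⁻¹ - (g 0 ^ l)⁻¹ - (g 2 ^ l)⁻¹) * p -
      (2 * (g 0 ^ l)⁻¹ - (g 1 ^ l)⁻¹ - (g 2 ^ l)⁻¹) * q with hN
  set D' : ℝ := (2 * (g 1 ^ l)⁻¹ - (g 0 ^ l)⁻¹ - (g 2 ^ l)⁻¹) * r -
      (2 * (g 0 ^ l)⁻¹ - (g 1 ^ l)⁻¹ - (g 2 ^ l)⁻¹) * s with hD'
  have hlog : ∀ j : Fin 3, HasDerivAt (fun t : ℝ => Real.log (1 + t * ((g ^ l : V3) j - 1)))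
      ((g j ^ l)⁻¹ * (g j ^ l - 1)) 1 := by
    intro j
    have hv : (g ^ l : V3) j = g j ^ l := by simp [Pi.pow_apply]
    have h1 : HasDerivAt (fun t : ℝ => 1 + t * ((g ^ l : V3) j - 1)) ((g ^ l : V3) j - 1) 1 := by
      simpa using ((hasDerivAt_id (1:ℝ)).mul_const ((g ^ l : V3) j - 1)).const_add 1
    have hval : 1 + 1 * (g j ^ l - 1) = g j ^ l := by ring
    have h2 := (Real.hasDerivAt_log (by rw [hv, hval]; exact hgln j)).comp 1 h1
    simp only [Function.comp_def, hv, hval] at h2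
    exact h2
  have hX : HasDerivAt (fun t => xC (g₁ : V3) (g₂ : V3) g l t) (-D' / (3 * D₁)) 1 := by
    have hbig := ((((hlog 1).sub ((((hlog 0).add (hlog 1)).add (hlog 2)).div_const 3)).mul_const r).sub
      (((hlog 0).sub ((((hlog 0).add (hlog 1)).add (hlog 2)).div_const 3)).mul_const s)).div_const D₁
    have heq : (fun t : ℝ => ((Real.log (1 + t * ((g ^ l : V3) 1 - 1)) -
        (Real.log (1 + t * ((g ^ l : V3) 0 - 1)) + Real.log (1 + t * ((g ^ l : V3) 1 - 1)) +
          Real.log (1 + t * ((g ^ l : V3) 2 - 1))) / 3) * r -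
        (Real.log (1 + t * ((g ^ l : V3) 0 - 1)) -
        (Real.log (1 + t * ((g ^ l : V3) 0 - 1)) + Real.log (1 + t * ((g ^ l : V3) 1 - 1)) +
          Real.log (1 + t * ((g ^ l : V3) 2 - 1))) / 3) * s) / D₁)
        = fun t => xC (g₁ : V3) (g₂ : V3) g l t := by
      funext t
      simp only [xC, phi, logHc, seg, hp, hq, hr, hs, hD₁def]
    simp only [Pi.sub_apply, Pi.add_apply] at hbig
    rw [heq] at hbig
    have hsub : ∀ j : Fin 3, (g j ^ l)⁻¹ * (g j ^ l - 1) = 1 - (g j ^ l)⁻¹ := fun j => by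
      rw [mul_sub, inv_mul_cancel₀ (hgln j), mul_one]
    rw [hsub 0, hsub 1, hsub 2] at hbig
    refine hbig.congr_deriv ?_
    rw [hD', hD₁def]
    field_simp
    ring
  have hD₂ : p * s - q * r ≠ 0 := fun h => hD₁ (by rw [hD₁def]; linarith)
  have hY : HasDerivAt (fun t => yC (g₁ : V3) (g₂ : V3) g l t) (N / (3 * D₁)) 1 := by
    have hbig := ((((hlog 1).sub ((((hlog 0).add (hlog 1)).add (hlog 2)).div_const 3)).mul_const p).sub
      (((hlog 0).sub ((((hlog 0).add (hlog 1)).add (hlog 2)).div_const 3)).mul_const q)).div_const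
      (p * s - q * r)
    have heq : (fun t : ℝ => ((Real.log (1 + t * ((g ^ l : V3) 1 - 1)) -
        (Real.log (1 + t * ((g ^ l : V3) 0 - 1)) + Real.log (1 + t * ((g ^ l : V3) 1 - 1)) +
          Real.log (1 + t * ((g ^ l : V3) 2 - 1))) / 3) * p -
        (Real.log (1 + t * ((g ^ l : V3) 0 - 1)) -
        (Real.log (1 + t * ((g ^ l : V3) 0 - 1)) + Real.log (1 + t * ((g ^ l : V3) 1 - 1)) +
          Real.log (1 + t * ((g ^ l : V3) 2 - 1))) / 3) * q) / (p * s - q * r))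
        = fun t => yC (g₁ : V3) (g₂ : V3) g l t := by
      funext t
      simp only [yC, phi, logHc, seg, hp, hq, hr, hs]
    simp only [Pi.sub_apply, Pi.add_apply] at hbig
    rw [heq] at hbig
    have hsub : ∀ j : Fin 3, (g j ^ l)⁻¹ * (g j ^ l - 1) = 1 - (g j ^ l)⁻¹ := fun j => by
      rw [mul_sub, inv_mul_cancel₀ (hgln j), mul_one]
    rw [hsub 0, hsub 1, hsub 2] at hbig
    refine hbig.congr_deriv ?_
    rw [hN, hD₁def]
    rw [show p * s - q * r = -(r * q - s * p) by ring]
    have hD₁' : r * q - s * p ≠ 0 := hD₁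
    field_simp
    ring
  have h3D₁ : (3 : ℝ) * D₁ ≠ 0 := mul_ne_zero three_ne_zero hD₁
  have hGx_ne : -D' / (3 * D₁) ≠ 0 := div_ne_zero (neg_ne_zero.mpr hD) h3D₁
  have TX := (hasDerivAt_iff_tendsto_slope.mp hX).mono_left
    (nhdsWithin_mono 1 fun x hx => (ne_of_lt hx : x ≠ 1))
  have TY := (hasDerivAt_iff_tendsto_slope.mp hY).mono_left
    (nhdsWithin_mono 1 fun x hx => (ne_of_lt hx : x ≠ 1))
  have T := TY.div TX hGx_ne
  have hval : N / (3 * D₁) / (-D' / (3 * D₁)) = -(N / D') := by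
    rw [div_div_div_comm, div_self h3D₁, div_one, div_neg]
  rw [hval] at T
  refine T.congr' ?_
  filter_upwards [self_mem_nhdsWithin] with t ht
  have hne : t - 1 ≠ 0 := sub_ne_zero.mpr (ne_of_lt ht)
  show slope (fun t => yC (g₁ : V3) (g₂ : V3) g l t) 1 t / slope (fun t => xC (g₁ : V3) (g₂ : V3) g l t) 1 t = _
  rw [slope_def_field, slope_def_field, div_div_div_comm, div_self hne, div_one]
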